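/- For all radially symmetric $f \in H^1(\mathbb{R}^3)$ there is a constant $C > 0$ (independent of $f$) such that $\||x| f\|_{L^\infty(\mathbb{R}^3)} \le C \|f\|_{H^1(\mathbb{R}^3)}$, i.e. $|x||f(x)| \le C\|f\|_{H^1}$ for almost every $x \in \mathbb{R}^3$. -/

import Mathlib

open MeasureTheory Real

noncomputable abbrev E3 : Type := EuclideanSpace ℝ (Fin 3)

/-- Squared `L²` norm ∫|f|². -/
noncomputable def mSq (f : E3 → ℂ) : ℝ := ∫ x, ‖f x‖ ^ 2

/-- Squared `L²` norm of the gradient ∫|∇f|². -/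
noncomputable def gSq (f : E3 → ℂ) : ℝ :=
  ∫ x, ∑ j : Fin 3, ‖fderiv ℝ f x (EuclideanSpace.single j 1)‖ ^ 2

lemma sum_sq_functional (A : E3 →L[ℝ] ℝ) (b : OrthonormalBasis (Fin 3) ℝ E3) :
    ∑ j, (A (b j))^2 = ‖(InnerProductSpace.toDual ℝ E3).symm A‖^2 := by
  set u := (InnerProductSpace.toDual ℝ E3).symm A with hu
  have hA : ∀ v, A v = inner ℝ u v := fun v => (InnerProductSpace.toDual_symm_apply).symm
  calc ∑ j, (A (b j))^2 = ∑ j, inner ℝ u (b j) * inner ℝ (b j) u := by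
        simp_rw [hA, sq, real_inner_comm u]
    _ = inner ℝ u u := b.sum_inner_mul_inner u u
    _ = ‖u‖^2 := real_inner_self_eq_norm_sq u

lemma sum_sq_onb_indep (A : E3 →L[ℝ] ℂ) (b b' : OrthonormalBasis (Fin 3) ℝ E3) :
    ∑ j, ‖A (b j)‖^2 = ∑ j, ‖A (b' j)‖^2 := by
  have key : ∀ c : OrthonormalBasis (Fin 3) ℝ E3, ∑ j, ‖A (c j)‖^2 =
      ‖(InnerProductSpace.toDual ℝ E3).symm (Complex.reCLM.comp A)‖^2 +
      ‖(InnerProductSpace.toDual ℝ E3).symm (Complex.imCLM.comp A)‖^2 := by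
    intro c
    have hnorm : ∀ v : E3, ‖A v‖^2 = (Complex.reCLM.comp A v)^2 + (Complex.imCLM.comp A v)^2 := by
      intro v
      rw [Complex.sq_norm, Complex.normSq_apply]
      simp [sq]
    simp_rw [hnorm, Finset.sum_add_distrib,
      sum_sq_functional (Complex.reCLM.comp A) c, sum_sq_functional (Complex.imCLM.comp A) c]
  rw [key b, key b']

lemma radial_G (f : E3 → ℂ) (hf : ContDiff ℝ 1 f) (hrad : ∀ x y : E3, ‖x‖ = ‖y‖ → f x = f y)
    {x y : E3} (h : ‖x‖ = ‖y‖) :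
    ∑ j : Fin 3, ‖fderiv ℝ f x (EuclideanSpace.single j 1)‖^2
      = ∑ j : Fin 3, ‖fderiv ℝ f y (EuclideanSpace.single j 1)‖^2 := by
  set R : E3 ≃ₗᵢ[ℝ] E3 := Submodule.reflection (ℝ ∙ (x - y))ᗮ with hRdef
  have hR : R x = y := Submodule.reflection_sub h
  have hcomp : f ∘ R = f := by
    funext z
    exact hrad (R z) z (R.norm_map z)
  have h1 : fderiv ℝ f x = (fderiv ℝ f (R x)).comp (R : E3 →L[ℝ] E3) := by
    conv_lhs => rw [← hcomp]
    rw [fderiv_comp x (hf.differentiable one_ne_zero _) R.differentiableAt, R.fderiv]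
  have h2 : ∀ j : Fin 3, fderiv ℝ f x (EuclideanSpace.single j 1)
      = fderiv ℝ f y (R (EuclideanSpace.basisFun (Fin 3) ℝ j)) := by
    intro j
    rw [h1, hR]
    simp
  simp_rw [h2]
  have h3 : ∀ j : Fin 3, R (EuclideanSpace.basisFun (Fin 3) ℝ j)
      = ((EuclideanSpace.basisFun (Fin 3) ℝ).map R) j := fun j =>
    ((EuclideanSpace.basisFun (Fin 3) ℝ).map_apply R j).symm
  simp_rw [h3]
  have := sum_sq_onb_indep (fderiv ℝ f y) ((EuclideanSpace.basisFun (Fin 3) ℝ).map R)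
    (EuclideanSpace.basisFun (Fin 3) ℝ)
  rw [this]
  simp

noncomputable def cBall : ℝ := 3 * (volume (Metric.ball (0:E3) 1)).toReal

lemma cBall_pos : 0 < cBall := by
  apply mul_pos (by norm_num)
  rw [ENNReal.toReal_pos_iff]
  exact ⟨Metric.measure_ball_pos _ _ one_pos, measure_ball_lt_top⟩

/-- Shell estimate: for a radial nonneg integrable profile. -/
lemma shell_est (w : ℝ → ℝ) (hw : Continuous w) (hw0 : ∀ s, 0 ≤ s → 0 ≤ w s)
    (hint : Integrable (fun x : E3 => w ‖x‖)) {r R : ℝ} (hr : 0 < r) :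
    cBall * ∫ s in Set.Ioc r R, s ^ 2 * w s ≤ ∫ x : E3, w ‖x‖ := by
  set fR : ℝ → ℝ := (Set.Ioc r R).indicator w with hfR
  have key := integral_fun_norm_addHaar (volume : Measure E3) fR
  have hdim : Module.finrank ℝ E3 = 3 := finrank_euclideanSpace_fin
  rw [hdim] at key
  -- LHS of key
  have hL : (fun x : E3 => fR ‖x‖) = Set.indicator ((fun x : E3 => ‖x‖) ⁻¹' (Set.Ioc r R))
      (fun x : E3 => w ‖x‖) := by
    funext x
    simp [hfR, Set.indicator, Set.mem_preimage]
  have hmeas : MeasurableSet ((fun x : E3 => ‖x‖) ⁻¹' (Set.Ioc r R)) :=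
    measurable_norm measurableSet_Ioc
  have hLint : ∫ x : E3, fR ‖x‖ = ∫ x in (fun x : E3 => ‖x‖) ⁻¹' (Set.Ioc r R), w ‖x‖ := by
    rw [hL, integral_indicator hmeas]
  have hLle : ∫ x : E3, fR ‖x‖ ≤ ∫ x : E3, w ‖x‖ := by
    rw [hLint]
    apply setIntegral_le_integral hint
    filter_upwards with x using hw0 _ (norm_nonneg x)
  -- RHS of key
  have hR2 : (fun y : ℝ => y ^ (3-1) • fR y) = Set.indicator (Set.Ioc r R)
      (fun s => s ^ 2 * w s) := by
    funext y
    by_cases hy : y ∈ Set.Ioc r R <;> simp [hfR, Set.indicator, hy]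
  have hsub : Set.Ioc r R ⊆ Set.Ioi (0:ℝ) := fun s hs => lt_trans hr hs.1
  have hR3 : ∫ y in Set.Ioi (0:ℝ), y ^ (3-1) • fR y = ∫ s in Set.Ioc r R, s ^ 2 * w s := by
    rw [hR2, integral_indicator measurableSet_Ioc,
      Measure.restrict_restrict_of_subset hsub]
  rw [hR3] at key
  rw [hLint] at key
  calc cBall * ∫ s in Set.Ioc r R, s ^ 2 * w s
      = ∫ x in (fun x : E3 => ‖x‖) ⁻¹' (Set.Ioc r R), w ‖x‖ := by
        rw [key, cBall]; push_cast [smul_eq_mul]; rw [measureReal_def]; ring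
    _ ≤ ∫ x : E3, w ‖x‖ := by rw [← hLint]; exact hLle

section Main
variable (f : E3 → ℂ)

noncomputable def eE3 : E3 := EuclideanSpace.single (0 : Fin 3) (1:ℝ)

lemma norm_eE3 : ‖eE3‖ = 1 := by simp [eE3, EuclideanSpace.norm_single]

noncomputable def gg (s : ℝ) : ℂ := f (s • eE3)

lemma hasDerivAt_gg (hf : ContDiff ℝ 1 f) (s : ℝ) :
    HasDerivAt (gg f) (fderiv ℝ f (s • eE3) eE3) s := by
  have hL : HasDerivAt (fun t : ℝ => t • eE3) eE3 s := by
    simpa using (hasDerivAt_id s).smul_const eE3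
  exact ((hf.differentiable one_ne_zero (s • eE3)).hasFDerivAt).comp_hasDerivAt s hL

lemma cont_d (hf : ContDiff ℝ 1 f) : Continuous (fun s : ℝ => fderiv ℝ f (s • eE3) eE3) := by
  have h1 : Continuous (fun s : ℝ => fderiv ℝ f (s • eE3)) :=
    (hf.continuous_fderiv one_ne_zero).comp (continuous_id.smul continuous_const)
  exact (ContinuousLinearMap.apply ℝ ℂ eE3).continuous.comp h1

end Main

lemma pointwise_sq (f : E3 → ℂ) (hf : ContDiff ℝ 1 f)
    (hrad : ∀ x y : E3, ‖x‖ = ‖y‖ → f x = f y)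
    (hint1 : Integrable (fun x : E3 => ‖f x‖ ^ 2))
    (hint2 : Integrable (fun x : E3 =>
      ∑ j : Fin 3, ‖fderiv ℝ f x (EuclideanSpace.single j 1)‖ ^ 2))
    (x : E3) (hx : 0 < ‖x‖) :
    ‖x‖ ^ 2 * ‖f x‖ ^ 2 ≤ (mSq f + gSq f) / cBall := by
  set r := ‖x‖ with hr
  set g : ℝ → ℂ := gg f with hgdef
  set d : ℝ → ℂ := fun s => fderiv ℝ f (s • eE3) eE3 with hddef
  have hgc : Continuous g := hf.continuous.comp (continuous_id.smul continuous_const)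
  have hdc : Continuous d := cont_d f hf
  set g1 : ℝ → ℝ := fun s => (g s).re with hg1def
  set g2 : ℝ → ℝ := fun s => (g s).im with hg2def
  set d1 : ℝ → ℝ := fun s => (d s).re with hd1def
  set d2 : ℝ → ℝ := fun s => (d s).im with hd2def
  have hg1c : Continuous g1 := Complex.continuous_re.comp hgc
  have hg2c : Continuous g2 := Complex.continuous_im.comp hgc
  have hd1c : Continuous d1 := Complex.continuous_re.comp hdc
  have hd2c : Continuous d2 := Complex.continuous_im.comp hdc
  have hg1 : ∀ s, HasDerivAt g1 (d1 s) s := fun s =>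
    (Complex.reCLM.hasFDerivAt.comp_hasDerivAt s (hasDerivAt_gg f hf s))
  have hg2 : ∀ s, HasDerivAt g2 (d2 s) s := fun s =>
    (Complex.imCLM.hasFDerivAt.comp_hasDerivAt s (hasDerivAt_gg f hf s))
  set F : ℝ → ℝ := fun s => g1 s ^ 2 + g2 s ^ 2 with hFdef
  have hFc : Continuous F := (hg1c.pow 2).add (hg2c.pow 2)
  have hnormsq : ∀ z : ℂ, ‖z‖ ^ 2 = z.re ^ 2 + z.im ^ 2 := by
    intro z
    rw [Complex.sq_norm, Complex.normSq_apply]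
    ring
  -- radial identities
  have hfx : ∀ z : E3, f z = g ‖z‖ := by
    intro z
    apply hrad
    rw [norm_smul, norm_eE3, Real.norm_eq_abs, abs_of_nonneg (norm_nonneg z), mul_one]
  have hFrad : ∀ z : E3, ‖f z‖ ^ 2 = F ‖z‖ := by
    intro z
    rw [hfx z, hnormsq]
  set G : E3 → ℝ := fun z => ∑ j : Fin 3, ‖fderiv ℝ f z (EuclideanSpace.single j 1)‖ ^ 2
    with hGdef
  set H : ℝ → ℝ := fun s => G (s • eE3) with hHdef
  have hGrad : ∀ z : E3, G z = H ‖z‖ := by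
    intro z
    apply radial_G f hf hrad
    rw [norm_smul, norm_eE3, Real.norm_eq_abs, abs_of_nonneg (norm_nonneg z), mul_one]
  have hHc : Continuous H := by
    apply continuous_finset_sum
    intro j _
    have h1 : Continuous (fun s : ℝ => fderiv ℝ f (s • eE3)) :=
      (hf.continuous_fderiv one_ne_zero).comp (continuous_id.smul continuous_const)
    exact (((ContinuousLinearMap.apply ℝ ℂ (EuclideanSpace.single j 1)).continuous.comp
      h1).norm.pow 2)
  have hHnn : ∀ s : ℝ, 0 ≤ H s := fun s =>
    Finset.sum_nonneg fun j _ => sq_nonneg _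
  have hDleH : ∀ s : ℝ, d1 s ^ 2 + d2 s ^ 2 ≤ H s := by
    intro s
    have : d1 s ^ 2 + d2 s ^ 2 = ‖d s‖ ^ 2 := (hnormsq (d s)).symm
    rw [this]
    have : ‖d s‖ ^ 2 = ‖fderiv ℝ f (s • eE3) (EuclideanSpace.single (0 : Fin 3) 1)‖ ^ 2 := rfl
    rw [this]
    exact Finset.single_le_sum (f := fun j : Fin 3 =>
      ‖fderiv ℝ f (s • eE3) (EuclideanSpace.single j 1)‖ ^ 2)
      (fun j _ => sq_nonneg _) (Finset.mem_univ 0)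
  -- mSq and gSq via shell
  have hmSq_eq : mSq f = ∫ z : E3, F ‖z‖ := by
    rw [mSq]; congr 1; funext z; rw [hFrad]
  have hgSq_eq : gSq f = ∫ z : E3, H ‖z‖ := by
    rw [gSq]; congr 1; funext z; rw [← hGrad]
  have hintF : Integrable (fun z : E3 => F ‖z‖) := by
    apply hint1.congr
    filter_upwards with z using (hFrad z)
  have hintH : Integrable (fun z : E3 => H ‖z‖) := by
    apply hint2.congr
    filter_upwards with z using (hGrad z)
  have hmSq_nn : 0 ≤ mSq f := integral_nonneg fun z => sq_nonneg _
  have hgSq_nn : 0 ≤ gSq f := integral_nonneg fun z =>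
    Finset.sum_nonneg fun j _ => sq_nonneg _
  have shellF : ∀ R : ℝ, cBall * ∫ s in Set.Ioc r R, s ^ 2 * F s ≤ mSq f := by
    intro R
    rw [hmSq_eq]
    exact shell_est F hFc (fun s _ => add_nonneg (sq_nonneg _) (sq_nonneg _)) hintF hx
  have shellH : ∀ R : ℝ, cBall * ∫ s in Set.Ioc r R, s ^ 2 * H s ≤ gSq f := by
    intro R
    rw [hgSq_eq]
    exact shell_est H hHc (fun s _ => hHnn s) hintH hx
  -- the derivative of φ
  set φ : ℝ → ℝ := fun s => s ^ 2 * (g1 s ^ 2 + g2 s ^ 2) with hφdef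
  set φ' : ℝ → ℝ := fun s =>
    2 * s * (g1 s ^ 2 + g2 s ^ 2) + s ^ 2 * (2 * g1 s * d1 s + 2 * g2 s * d2 s) with hφ'def
  have hφ : ∀ s, HasDerivAt φ (φ' s) s := by
    intro s
    have h1 := ((hg1 s).pow 2).add ((hg2 s).pow 2)
    have h2 := (hasDerivAt_pow 2 s).mul h1
    exact h2.congr_deriv (by simp only [hφ'def, Pi.add_apply, Pi.pow_apply]; ring)
  have hφ'c : Continuous φ' := by
    apply Continuous.add
    · exact (continuous_const.mul continuous_id).mul ((hg1c.pow 2).add (hg2c.pow 2))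
    · exact (continuous_pow 2).mul
        (((continuous_const.mul hg1c).mul hd1c).add ((continuous_const.mul hg2c).mul hd2c))
  
  -- FTC bound
  have hχc : Continuous (fun s : ℝ => s ^ 2 * (F s + H s)) :=
    (continuous_pow 2).mul (hFc.add hHc)
  have hdiv : ∀ R : ℝ, (∫ s in Set.Ioc r R, s ^ 2 * F s) ≤ mSq f / cBall := fun R =>
    (le_div_iff₀ cBall_pos).mpr (by rw [mul_comm]; exact shellF R)
  have hdivH : ∀ R : ℝ, (∫ s in Set.Ioc r R, s ^ 2 * H s) ≤ gSq f / cBall := fun R =>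
    (le_div_iff₀ cBall_pos).mpr (by rw [mul_comm]; exact shellH R)
  have hφbound : ∀ R, r ≤ R → φ r ≤ φ R + (mSq f + gSq f) / cBall := by
    intro R hrR
    have hFTC : ∫ s in r..R, φ' s = φ R - φ r :=
      intervalIntegral.integral_eq_sub_of_hasDerivAt (fun s _ => hφ s)
        (hφ'c.intervalIntegrable r R)
    have hmono : ∫ s in r..R, (-φ' s) ≤ ∫ s in r..R, s ^ 2 * (F s + H s) := by
      apply intervalIntegral.integral_mono_on hrR (hφ'c.neg.intervalIntegrable r R)
        (hχc.intervalIntegrable r R)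
      intro s hs
      have hs0 : 0 < s := lt_of_lt_of_le hx hs.1
      have hDH := hDleH s
      have hFs : F s = g1 s ^ 2 + g2 s ^ 2 := rfl
      rw [hFs]
      simp only [hφ'def, Pi.neg_apply]
      nlinarith [sq_nonneg (s * (g1 s + d1 s)), sq_nonneg (s * (g2 s + d2 s)),
        mul_nonneg hs0.le (add_nonneg (sq_nonneg (g1 s)) (sq_nonneg (g2 s)))]
    have hsplit : ∫ s in r..R, s ^ 2 * (F s + H s)
        = (∫ s in Set.Ioc r R, s ^ 2 * F s) + ∫ s in Set.Ioc r R, s ^ 2 * H s := by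
      rw [intervalIntegral.integral_of_le hrR]
      have heq : (fun s : ℝ => s ^ 2 * (F s + H s))
          = fun s => s ^ 2 * F s + s ^ 2 * H s := by funext s; ring
      rw [heq]
      exact integral_add (((continuous_pow 2).mul hFc).integrableOn_Ioc)
        (((continuous_pow 2).mul hHc).integrableOn_Ioc)
    have hneg : ∫ s in r..R, (-φ' s) = -(φ R - φ r) := by
      rw [intervalIntegral.integral_neg, hFTC]
    have := hmono
    rw [hneg, hsplit] at this
    have h1 := hdiv R
    have h2 := hdivH R
    rw [add_div]
    linarith
  -- the epsilon argument
  have hsmall : ∀ ε > 0, ∃ R ≥ r, φ R < ε := by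
    intro ε hε
    by_contra hcon
    push_neg at hcon
    set R₀ := r + (mSq f / cBall + 1) / ε with hR₀
    have hnum : 0 ≤ mSq f / cBall + 1 := add_nonneg (div_nonneg hmSq_nn cBall_pos.le) zero_le_one
    have hR₀r : r ≤ R₀ := le_add_of_nonneg_right (div_nonneg hnum hε.le)
    have hlow : ε * (R₀ - r) ≤ ∫ s in Set.Ioc r R₀, s ^ 2 * F s := by
      have hc : ∫ s in Set.Ioc r R₀, (ε : ℝ) = ε * (R₀ - r) := by
        rw [setIntegral_const, Real.volume_real_Ioc_of_le hR₀r,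
          smul_eq_mul, mul_comm]
      rw [← hc]
      apply setIntegral_mono_on
      · exact integrableOn_const (by rw [Real.volume_Ioc]; exact ENNReal.ofReal_ne_top)
      · exact ((continuous_pow 2).mul hFc).integrableOn_Ioc
      · exact measurableSet_Ioc
      · intro s hs
        exact hcon s (le_of_lt hs.1)
    have hup := hdiv R₀
    have hval : ε * (R₀ - r) = mSq f / cBall + 1 := by
      rw [hR₀]
      field_simp
      ring
    rw [hval] at hlow
    linarith
  have hφr : φ r ≤ (mSq f + gSq f) / cBall := by
    apply le_of_forall_pos_le_add
    intro ε hε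
    obtain ⟨R, hRr, hRφ⟩ := hsmall ε hε
    have := hφbound R hRr
    linarith
  have hfin : ‖f x‖ ^ 2 = F r := hFrad x
  rw [hfin]
  exact hφr

/-- Strauss radial Sobolev embedding in `ℝ³`. -/
theorem stmt7 :
    ∃ C > 0, ∀ f : E3 → ℂ,
      ContDiff ℝ 1 f →
      (∀ x y : E3, ‖x‖ = ‖y‖ → f x = f y) →
      Integrable (fun x => ‖f x‖ ^ 2) →
      Integrable (fun x =>
        ∑ j : Fin 3, ‖fderiv ℝ f x (EuclideanSpace.single j 1)‖ ^ 2) →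
      ∀ᵐ x : E3, ‖x‖ * ‖f x‖ ≤ C * Real.sqrt (mSq f + gSq f) := by
  refine ⟨Real.sqrt (1 / cBall), Real.sqrt_pos.mpr (one_div_pos.mpr cBall_pos), ?_⟩
  intro f hf hrad hint1 hint2
  apply Filter.Eventually.of_forall
  intro x
  rcases eq_or_lt_of_le (norm_nonneg x) with h0 | hx
  · rw [← h0, zero_mul]
    exact mul_nonneg (Real.sqrt_nonneg _) (Real.sqrt_nonneg _)
  · have key := pointwise_sq f hf hrad hint1 hint2 x hx
    have h1 : (‖x‖ * ‖f x‖) ^ 2 ≤ (1 / cBall) * (mSq f + gSq f) := by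
      calc (‖x‖ * ‖f x‖) ^ 2 = ‖x‖ ^ 2 * ‖f x‖ ^ 2 := mul_pow _ _ _
        _ ≤ (mSq f + gSq f) / cBall := key
        _ = (1 / cBall) * (mSq f + gSq f) := by ring
    calc ‖x‖ * ‖f x‖ = Real.sqrt ((‖x‖ * ‖f x‖) ^ 2) :=
          (Real.sqrt_sq (mul_nonneg (norm_nonneg x) (norm_nonneg (f x)))).symm
      _ ≤ Real.sqrt ((1 / cBall) * (mSq f + gSq f)) := Real.sqrt_le_sqrt h1
      _ = Real.sqrt (1 / cBall) * Real.sqrt (mSq f + gSq f) :=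
          Real.sqrt_mul (one_div_pos.mpr cBall_pos).le _
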